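/- The horizontal generating function identity for r-Stirling numbers: (x+r)^n = \sum_{k=0}^n S_r(n+r, k+r) x(x-1)\cdots(x-k+1) holds as an identity of polynomials. -/

import Mathlib

/-- `rS r n k` is the r-Stirling number of the second kind `S_r(n+r, k+r)`. -/
def rS (r : ℕ) : ℕ → ℕ → ℕ
  | 0, 0 => 1
  | 0, _ + 1 => 0
  | n + 1, 0 => r * rS r n 0
  | n + 1, k + 1 => (k + 1 + r) * rS r n (k + 1) + rS r n k

/-- The r-Stirling number of the second kind `S_r(n,k)`. -/
def rStirling (r n k : ℕ) : ℕ :=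
  if r ≤ n ∧ r ≤ k then rS r (n - r) (k - r) else 0

/-- The r-Bell polynomial `B_{n,r}(x)` as a real function. -/
def rBellPoly (r n : ℕ) (x : ℝ) : ℝ :=
  ∑ k ∈ Finset.range (n + 1), (rS r n k : ℝ) * x ^ k

/-- The r-Bell number `B_{n,r}`. -/
def rBell (r n : ℕ) : ℕ :=
  ∑ k ∈ Finset.range (n + 1), rS r n k

open Polynomial Finset

lemma rS_eq_zero (r : ℕ) : ∀ n k, n < k → rS r n k = 0
  | 0, _ + 1, _ => rfl
  | n + 1, k + 1, h => by
    have h1 : n < k := by omega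
    simp [rS, rS_eq_zero r n (k + 1) (by omega), rS_eq_zero r n k h1]

/-- The falling-factorial polynomial. -/
noncomputable def ffact (k : ℕ) : Polynomial ℝ :=
  ∏ i ∈ Finset.range k, (X - C (i : ℝ))

lemma key (r k : ℕ) :
    (X + C (r : ℝ)) * ffact k = ffact (k + 1) + C ((k : ℝ) + r) * ffact k := by
  rw [ffact, ffact, prod_range_succ, map_add]
  ring

lemma aux (n r : ℕ) :
    (X + C (r : ℝ)) ^ n = ∑ k ∈ Finset.range (n + 1), C (rS r n k : ℝ) * ffact k := by
  induction n with
  | zero => simp [rS, ffact]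
  | succ n ih =>
    have hstep : (X + C (r : ℝ)) ^ (n + 1) = (X + C (r : ℝ)) * (X + C (r : ℝ)) ^ n := by ring
    have expand : ∀ k, (X + C (r : ℝ)) * (C (rS r n k : ℝ) * ffact k)
        = C (rS r n k : ℝ) * ffact (k + 1)
          + C ((rS r n k : ℝ) * ((k : ℝ) + r)) * ffact k := by
      intro k
      rw [mul_left_comm, key r k, map_mul]
      ring
    rw [hstep, ih, Finset.mul_sum]
    rw [Finset.sum_congr rfl (fun k _ => expand k), Finset.sum_add_distrib]
    have hR : ∑ k ∈ Finset.range (n + 1 + 1), C (rS r (n + 1) k : ℝ) * ffact k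
        = ∑ k ∈ Finset.range (n + 1), C (rS r (n + 1) (k + 1) : ℝ) * ffact (k + 1)
          + C (rS r (n + 1) 0 : ℝ) * ffact 0 :=
      Finset.sum_range_succ' _ (n + 1)
    have hL2 : ∑ k ∈ Finset.range (n + 1), C ((rS r n k : ℝ) * ((k : ℝ) + r)) * ffact k
        = ∑ k ∈ Finset.range n, C ((rS r n (k + 1) : ℝ) * (((k : ℕ) + 1 : ℕ) + r : ℝ)) * ffact (k + 1)
          + C ((rS r n 0 : ℝ) * ((0 : ℝ) + r)) * ffact 0 := by
      rw [Finset.sum_range_succ' (fun k => C ((rS r n k : ℝ) * ((k : ℝ) + r)) * ffact k) n]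
      push_cast
      ring_nf
      rw [add_comm]
      congr 1
      refine Finset.sum_congr rfl (fun x _ => ?_)
      congr 2; ring
    rw [hR, hL2]
    have hext : ∑ k ∈ Finset.range (n + 1),
          C ((rS r n (k + 1) : ℝ) * (((k : ℕ) + 1 : ℕ) + r : ℝ)) * ffact (k + 1)
        = ∑ k ∈ Finset.range n,
          C ((rS r n (k + 1) : ℝ) * (((k : ℕ) + 1 : ℕ) + r : ℝ)) * ffact (k + 1) := by
      rw [Finset.sum_range_succ, rS_eq_zero r n (n + 1) (by omega)]
      simp
    rw [← hext]
    rw [← add_assoc, ← Finset.sum_add_distrib]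
    have hterm : ∀ k ∈ Finset.range (n + 1),
        C (rS r n k : ℝ) * ffact (k + 1)
          + C ((rS r n (k + 1) : ℝ) * (((k : ℕ) + 1 : ℕ) + r : ℝ)) * ffact (k + 1)
        = C (rS r (n + 1) (k + 1) : ℝ) * ffact (k + 1) := by
      intro k _
      rw [show rS r (n + 1) (k + 1) = (k + 1 + r) * rS r n (k + 1) + rS r n k from rfl]
      push_cast [map_add, map_mul]
      ring
    rw [Finset.sum_congr rfl hterm]
    have h0 : (rS r (n + 1) 0 : ℝ) = (rS r n 0 : ℝ) * ((0 : ℝ) + r) := by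
      rw [show rS r (n + 1) 0 = r * rS r n 0 from rfl]
      push_cast
      ring
    rw [h0]

theorem rStirling_horizontal (n r : ℕ) :
    (Polynomial.X + Polynomial.C (r : ℝ)) ^ n =
      ∑ k ∈ Finset.range (n + 1),
        Polynomial.C (rS r n k : ℝ) *
          ∏ i ∈ Finset.range k, (Polynomial.X - Polynomial.C (i : ℝ)) := by
  simpa [ffact] using aux n r
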